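/- The Rudin–Shapiro-type sequence (r_n) over F_2 defined by r_0 = 1, r_{2n} = r_n, r_{4n+1} = r_n, r_{4n+3} = 1 + r_{2n+1} satisfies: its generating series R = Σ r_n X^n ∈ F_2[[X]] satisfies (1 + X)^5 R^2 + (1 + X)^4 R + X^3 = 0. -/

import Mathlib

open PowerSeries

private lemma rs_two_zero : (2 : (ZMod 2)⟦X⟧) = 0 := by
  rw [← map_ofNat (PowerSeries.C (R := ZMod 2)) 2, show (2:ZMod 2) = 0 from rfl, map_zero]

private lemma rs_sq_mk (r : ℕ → ZMod 2) :
    (PowerSeries.mk r) ^ 2 = PowerSeries.mk (fun n => if Even n then r (n/2) else 0) := by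
  ext n
  rw [pow_two, PowerSeries.coeff_mul, PowerSeries.coeff_mk]
  simp only [PowerSeries.coeff_mk]
  rcases Nat.even_or_odd n with ⟨m, hm⟩ | hodd
  · rw [if_pos ⟨m, hm⟩]
    have hc : (m, m) ∈ Finset.HasAntidiagonal.antidiagonal n := by rw [Finset.HasAntidiagonal.mem_antidiagonal]; omega
    rw [← Finset.add_sum_erase _ _ hc]
    have hz : ∑ p ∈ (Finset.HasAntidiagonal.antidiagonal n).erase (m, m), r p.1 * r p.2 = 0 := by
      apply Finset.sum_involution (fun p _ => Prod.swap p)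
      · intro a ha
        rw [mul_comm]
        exact CharTwo.add_self_eq_zero _
      · intro a ha _ hsw
        have ha' := Finset.mem_erase.mp ha
        have hmem := Finset.HasAntidiagonal.mem_antidiagonal.mp ha'.2
        apply ha'.1
        have h1 : a.1 = a.2 := by
          have := congrArg Prod.fst hsw; simpa [Prod.swap] using this.symm
        have e1 : a.1 = m := by omega
        have e2 : a.2 = m := by omega
        ext <;> simp [e1, e2]
      · intro a ha
        have ha' := Finset.mem_erase.mp ha
        have hmem := Finset.HasAntidiagonal.mem_antidiagonal.mp ha'.2
        refine Finset.mem_erase.mpr ⟨?_, ?_⟩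
        · intro h; apply ha'.1
          have h1 := congrArg Prod.fst h
          have h2 := congrArg Prod.snd h
          simp [Prod.swap] at h1 h2
          ext <;> simp <;> omega
        · rw [Finset.HasAntidiagonal.mem_antidiagonal]
          simp [Prod.swap]; omega
      · intro a ha; simp
    rw [hz, add_zero]
    have hd : n / 2 = m := by omega
    rw [hd]
    show r m * r m = r m
    rw [← pow_two]
    exact ZMod.pow_card (r m)
  · rw [if_neg (by simpa using Nat.not_even_iff_odd.mpr hodd)]
    apply Finset.sum_involution (fun p _ => Prod.swap p)
    · intro a ha; rw [mul_comm]; exact CharTwo.add_self_eq_zero _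
    · intro a ha _ hsw
      have h1 := congrArg Prod.fst hsw
      simp [Prod.swap] at h1
      have := Finset.HasAntidiagonal.mem_antidiagonal.mp ha
      exact (Nat.not_even_iff_odd.mpr hodd) ⟨a.2, by omega⟩
    · intro a ha
      rw [Finset.HasAntidiagonal.mem_antidiagonal] at ha ⊢
      simp [Prod.swap]; omega
    · intro a ha; simp

theorem rudin_shapiro_series_equation
    (r : ℕ → ZMod 2) (h0 : r 0 = 1)
    (h2 : ∀ n, r (2 * n) = r n)
    (h41 : ∀ n, r (4 * n + 1) = r n)
    (h43 : ∀ n, r (4 * n + 3) = 1 + r (2 * n + 1))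
    (R : PowerSeries (ZMod 2)) (hR : R = PowerSeries.mk r) :
    (1 + PowerSeries.X) ^ 5 * R ^ 2 + (1 + PowerSeries.X) ^ 4 * R
      + PowerSeries.X ^ 3 = 0 := by
  subst hR
  have hsq := rs_sq_mk r
  set s : ℕ → ZMod 2 := fun n => if Even n then r (n/2) else 0 with hs
  have sE : ∀ k, s (2 * k) = r k := by
    intro k; simp only [hs]
    rw [if_pos ⟨k, by ring⟩, Nat.mul_div_cancel_left _ (by norm_num)]
  have sO : ∀ k, s (2 * k + 1) = 0 := by
    intro k; simp only [hs]
    rw [if_neg (by simp [Nat.even_add_one, parity_simps])]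
  rw [hsq]
  have key : (1 + X) ^ 5 * (PowerSeries.mk s) + (1 + X) ^ 4 * (PowerSeries.mk r) + X ^ 3
      = PowerSeries.mk s + X ^ 1 * PowerSeries.mk s + X ^ 4 * PowerSeries.mk s
        + X ^ 5 * PowerSeries.mk s + PowerSeries.mk r + X ^ 4 * PowerSeries.mk r + X ^ 3 := by
    linear_combination ((2*X + 5*X^2 + 5*X^3 + 2*X^4) * PowerSeries.mk s
      + (2*X + 3*X^2 + 2*X^3) * PowerSeries.mk r) * rs_two_zero
  rw [key]
  ext n
  simp only [map_add, PowerSeries.coeff_X_pow_mul', PowerSeries.coeff_mk,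
    PowerSeries.coeff_X_pow, map_zero]
  rcases Nat.lt_or_ge n 5 with hn | hn
  · have s0 : s 0 = r 0 := by simpa using sE 0
    have s1 : s 1 = 0 := by simpa using sO 0
    have s2 : s 2 = r 1 := by simpa using sE 1
    have s3 : s 3 = 0 := by simpa using sO 1
    have s4 : s 4 = r 2 := by simpa using sE 2
    have hr1 : r 1 = r 0 := by simpa using h41 0
    have hr2 : r 2 = r 1 := by simpa using h2 1
    have hr3 : r 3 = 1 + r 1 := by simpa using h43 0
    have hr4 : r 4 = r 2 := by simpa using h2 2
    interval_cases n <;> norm_num <;>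
      simp only [s0, s1, s2, s3, s4, hr4, hr3, hr2, hr1] <;>
      · generalize r 0 = a
        revert a; decide
  · obtain ⟨m, rfl⟩ : ∃ m, n = m + 5 := ⟨n - 5, by omega⟩
    rw [if_pos (by omega : 1 ≤ m + 5), if_pos (by omega : 4 ≤ m + 5),
      if_pos (by omega : 4 ≤ m + 5), if_pos (by omega : 5 ≤ m + 5),
      if_neg (by omega : ¬ (m + 5 = 3))]
    have e1 : m + 5 - 1 = m + 4 := by omega
    have e4 : m + 5 - 4 = m + 1 := by omega
    have e5 : m + 5 - 5 = m := by omega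
    rw [e1, e4, e5, add_zero]
    obtain ⟨q, t, ht, rfl⟩ : ∃ q t, t < 4 ∧ m = 4 * q + t := ⟨m / 4, m % 4, by omega, by omega⟩
    interval_cases t
    · have A : s (4*q+0+5) = 0 := by rw [show 4*q+0+5 = 2*(2*q+2)+1 by ring]; exact sO _
      have B : s (4*q+0+4) = r (q+1) := by
        rw [show 4*q+0+4 = 2*(2*q+2) by ring, sE, show 2*q+2 = 2*(q+1) by ring, h2]
      have C : s (4*q+0+1) = 0 := by rw [show 4*q+0+1 = 2*(2*q)+1 by ring]; exact sO _
      have D : s (4*q+0) = r q := by rw [show 4*q+0 = 2*(2*q) by ring, sE, h2]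
      have E : r (4*q+0+5) = r (q+1) := by rw [show 4*q+0+5 = 4*(q+1)+1 by ring, h41]
      have F : r (4*q+0+1) = r q := by rw [show 4*q+0+1 = 4*q+1 by ring, h41]
      rw [A, B, C, D, E, F]
      generalize r q = a; generalize r (q+1) = b
      revert a b; decide
    · have A : s (4*q+1+5) = r (2*q+3) := by rw [show 4*q+1+5 = 2*(2*q+3) by ring, sE]
      have B : s (4*q+1+4) = 0 := by rw [show 4*q+1+4 = 2*(2*q+2)+1 by ring]; exact sO _
      have C : s (4*q+1+1) = r (2*q+1) := by rw [show 4*q+1+1 = 2*(2*q+1) by ring, sE]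
      have D : s (4*q+1) = 0 := by rw [show 4*q+1 = 2*(2*q)+1 by ring]; exact sO _
      have E : r (4*q+1+5) = r (2*q+3) := by rw [show 4*q+1+5 = 2*(2*q+3) by ring, h2]
      have F : r (4*q+1+1) = r (2*q+1) := by rw [show 4*q+1+1 = 2*(2*q+1) by ring, h2]
      rw [A, B, C, D, E, F]
      generalize r (2*q+1) = a; generalize r (2*q+3) = b
      revert a b; decide
    · have A : s (4*q+2+5) = 0 := by rw [show 4*q+2+5 = 2*(2*q+3)+1 by ring]; exact sO _
      have B : s (4*q+2+4) = r (2*q+3) := by rw [show 4*q+2+4 = 2*(2*q+3) by ring, sE]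
      have C : s (4*q+2+1) = 0 := by rw [show 4*q+2+1 = 2*(2*q+1)+1 by ring]; exact sO _
      have D : s (4*q+2) = r (2*q+1) := by rw [show 4*q+2 = 2*(2*q+1) by ring, sE]
      have E : r (4*q+2+5) = 1 + r (2*q+3) := by
        rw [show 4*q+2+5 = 4*(q+1)+3 by ring, h43, show 2*(q+1)+1 = 2*q+3 by ring]
      have F : r (4*q+2+1) = 1 + r (2*q+1) := by rw [show 4*q+2+1 = 4*q+3 by ring, h43]
      rw [A, B, C, D, E, F]
      generalize r (2*q+1) = a; generalize r (2*q+3) = b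
      revert a b; decide
    · have A : s (4*q+3+5) = r (q+2) := by
        rw [show 4*q+3+5 = 2*(2*q+4) by ring, sE, show 2*q+4 = 2*(q+2) by ring, h2]
      have B : s (4*q+3+4) = 0 := by rw [show 4*q+3+4 = 2*(2*q+3)+1 by ring]; exact sO _
      have C : s (4*q+3+1) = r (q+1) := by
        rw [show 4*q+3+1 = 2*(2*q+2) by ring, sE, show 2*q+2 = 2*(q+1) by ring, h2]
      have D : s (4*q+3) = 0 := by rw [show 4*q+3 = 2*(2*q+1)+1 by ring]; exact sO _
      have E : r (4*q+3+5) = r (q+2) := by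
        rw [show 4*q+3+5 = 2*(2*q+4) by ring, h2, show 2*q+4 = 2*(q+2) by ring, h2]
      have F : r (4*q+3+1) = r (q+1) := by
        rw [show 4*q+3+1 = 2*(2*q+2) by ring, h2, show 2*q+2 = 2*(q+1) by ring, h2]
      rw [A, B, C, D, E, F]
      generalize r (q+1) = a; generalize r (q+2) = b
      revert a b; decide
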